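/- If Φ is compact with respect to the sup-norm distance, then every sequence in X admits a Cauchy subsequence with respect to D_X; consequently, if in addition (X, D_X) is complete, then (X, D_X) is compact. -/

import Mathlib

open scoped ENNReal

open BoundedContinuousFunction Filter

section Aux

variable {X : Type*} [TopologicalSpace X]

/-- the sup-ENNReal-distance of two bounded (continuous) functions equals
`ENNReal.ofReal` of their sup-distance. -/
lemma aux_eD_eq_dist (f g : X →ᵇ ℝ) :
    (⨆ x, ENNReal.ofReal |f x - g x|) = ENNReal.ofReal (dist f g) := by
  have hle : (⨆ x, ENNReal.ofReal |f x - g x|) ≤ ENNReal.ofReal (dist f g) := by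
    refine iSup_le fun x => ENNReal.ofReal_le_ofReal ?_
    rw [← Real.dist_eq]
    exact dist_coe_le_dist x
  refine le_antisymm hle ?_
  set S := ⨆ x, ENNReal.ofReal |f x - g x| with hS
  have hSne : S ≠ ⊤ := ne_top_of_le_ne_top ENNReal.ofReal_ne_top hle
  have hdist : dist f g ≤ S.toReal := by
    refine (dist_le ENNReal.toReal_nonneg).2 fun x => ?_
    have h1 : ENNReal.ofReal |f x - g x| ≤ S := le_iSup (fun x => ENNReal.ofReal |f x - g x|) x
    have := ENNReal.toReal_mono hSne h1
    rwa [ENNReal.toReal_ofReal (abs_nonneg _), ← Real.dist_eq] at this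
  calc ENNReal.ofReal (dist f g) ≤ ENNReal.ofReal S.toReal := ENNReal.ofReal_le_ofReal hdist
    _ = S := ENNReal.ofReal_toReal hSne

end Aux

theorem stmt4 {X : Type*} [Nonempty X] (Φ : Set (X → ℝ))
    (hb : ∀ φ ∈ Φ, ∃ C : ℝ, ∀ x, |φ x| ≤ C)
    (eD : (X → ℝ) → (X → ℝ) → ℝ≥0∞)
    (heD : ∀ φ ψ, eD φ ψ = ⨆ x, ENNReal.ofReal |φ x - ψ x|)
    (DX : X → X → ℝ≥0∞)
    (hDX : ∀ x1 x2, DX x1 x2 = ⨆ φ ∈ Φ, ENNReal.ofReal |φ x1 - φ x2|)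
    (hΦcomp : ∀ u : ℕ → X → ℝ, (∀ n, u n ∈ Φ) →
      ∃ ψ ∈ Φ, ∃ k : ℕ → ℕ, StrictMono k ∧
        ∀ ε : ℝ≥0∞, 0 < ε → ∃ N, ∀ n ≥ N, eD (u (k n)) ψ < ε) :
    (∀ x : ℕ → X, ∃ k : ℕ → ℕ, StrictMono k ∧
      ∀ ε : ℝ≥0∞, 0 < ε → ∃ N, ∀ m ≥ N, ∀ n ≥ N, DX (x (k m)) (x (k n)) < ε) ∧
    ((∀ x : ℕ → X,
        (∀ ε : ℝ≥0∞, 0 < ε → ∃ N, ∀ m ≥ N, ∀ n ≥ N, DX (x m) (x n) < ε) →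
        ∃ y : X, ∀ ε : ℝ≥0∞, 0 < ε → ∃ N, ∀ n ≥ N, DX (x n) y < ε) →
      ∀ x : ℕ → X, ∃ y : X, ∃ k : ℕ → ℕ, StrictMono k ∧
        ∀ ε : ℝ≥0∞, 0 < ε → ∃ N, ∀ n ≥ N, DX (x (k n)) y < ε) := by
  classical
  -- give `X` the discrete topology so that every function is continuous
  letI : TopologicalSpace X := ⊥
  haveI : DiscreteTopology X := ⟨rfl⟩
  -- lift members of Φ to bounded continuous functions
  have hlift : ∀ φ ∈ Φ, ∃ f : X →ᵇ ℝ, ⇑f = φ := by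
    intro φ hφ
    obtain ⟨C, hC⟩ := hb φ hφ
    exact ⟨BoundedContinuousFunction.ofNormedAddCommGroup φ
      continuous_of_discreteTopology C (fun x => by simpa using hC x), rfl⟩
  set Φb : Set (X →ᵇ ℝ) := {f : X →ᵇ ℝ | ⇑f ∈ Φ} with hΦb
  -- Φb is compact
  have hseq : IsSeqCompact Φb := by
    intro u hu
    obtain ⟨ψ, hψ, k, hk, hconv⟩ := hΦcomp (fun n => ⇑(u n)) hu
    obtain ⟨g, hg⟩ := hlift ψ hψ
    refine ⟨g, by simpa [hΦb, hg] using hψ, k, hk, ?_⟩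
    rw [Metric.tendsto_atTop]
    intro ε hε
    obtain ⟨N, hN⟩ := hconv (ENNReal.ofReal ε) (by simpa using hε)
    refine ⟨N, fun n hn => ?_⟩
    have h := hN n hn
    rw [heD, ← hg, aux_eD_eq_dist] at h
    exact (ENNReal.ofReal_lt_ofReal_iff hε).1 h
  have hK : IsCompact Φb := isCompact_iff_isSeqCompact.2 hseq
  haveI : CompactSpace ↥Φb := isCompact_iff_compactSpace.mp hK
  -- uniform bound on Φb
  obtain ⟨R, hR⟩ : ∃ R : ℝ, ∀ f ∈ Φb, ‖f‖ ≤ R := by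
    obtain ⟨R, hR⟩ := (Metric.isBounded_iff_subset_closedBall 0).1 hK.isBounded
    exact ⟨R, fun f hf => by simpa [dist_zero_right] using hR hf⟩
  -- evaluation map
  have lip : ∀ x : X, LipschitzWith 1 (fun φ : ↥Φb => φ.1 x) := by
    intro x
    refine LipschitzWith.of_dist_le_mul fun φ ψ => ?_
    rw [NNReal.coe_one, one_mul, Subtype.dist_eq]
    exact dist_coe_le_dist x
  set F : X → (↥Φb →ᵇ ℝ) := fun x =>
    BoundedContinuousFunction.ofNormedAddCommGroup (fun φ : ↥Φb => φ.1 x)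
      (lip x).continuous R (fun φ => le_trans (norm_coe_le_norm φ.1 x) (hR φ.1 φ.2)) with hF
  have hFapp : ∀ (x : X) (φ : ↥Φb), F x φ = φ.1 x := fun x φ => rfl
  -- DX in terms of dist in `↥Φb →ᵇ ℝ`
  have hDXdist : ∀ x1 x2 : X, DX x1 x2 = ENNReal.ofReal (dist (F x1) (F x2)) := by
    intro x1 x2
    have hle : DX x1 x2 ≤ ENNReal.ofReal (dist (F x1) (F x2)) := by
      rw [hDX]
      refine iSup₂_le fun φ hφ => ?_
      obtain ⟨f, hf⟩ := hlift φ hφ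
      have hfΦb : f ∈ Φb := by simpa [hΦb, hf] using hφ
      have : |φ x1 - φ x2| = dist (F x1 ⟨f, hfΦb⟩) (F x2 ⟨f, hfΦb⟩) := by
        rw [hFapp, hFapp, Real.dist_eq, ← hf]
      rw [this]
      exact ENNReal.ofReal_le_ofReal (dist_coe_le_dist _)
    refine le_antisymm hle ?_
    set S := DX x1 x2 with hS
    have hSne : S ≠ ⊤ := ne_top_of_le_ne_top ENNReal.ofReal_ne_top hle
    have hdist : dist (F x1) (F x2) ≤ S.toReal := by
      refine (dist_le ENNReal.toReal_nonneg).2 fun φ => ?_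
      have h1 : ENNReal.ofReal |φ.1 x1 - φ.1 x2| ≤ S := by
        rw [hS, hDX]
        exact le_iSup₂ (f := fun ψ (_ : ψ ∈ Φ) => ENNReal.ofReal |ψ x1 - ψ x2|) ⇑φ.1 φ.2
      have := ENNReal.toReal_mono hSne h1
      rwa [ENNReal.toReal_ofReal (abs_nonneg _), ← Real.dist_eq, ← hFapp x1 φ, ← hFapp x2 φ]
        at this
    calc ENNReal.ofReal (dist (F x1) (F x2)) ≤ ENNReal.ofReal S.toReal :=
          ENNReal.ofReal_le_ofReal hdist
      _ = S := ENNReal.ofReal_toReal hSne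
  -- Arzelà–Ascoli: the closure of the range of F is compact
  have hequi : Equicontinuous ((↑) : Set.range F → ↥Φb → ℝ) := by
    refine Metric.equicontinuous_of_continuity_modulus id tendsto_id _ fun φ ψ f => ?_
    obtain ⟨x, hx⟩ := f.2
    have : (f : ↥Φb →ᵇ ℝ) = F x := hx.symm
    calc dist ((f : ↥Φb →ᵇ ℝ) φ) ((f : ↥Φb →ᵇ ℝ) ψ)
        = dist (φ.1 x) (ψ.1 x) := by rw [this, hFapp, hFapp]
      _ ≤ dist φ.1 ψ.1 := dist_coe_le_dist x
      _ = id (dist φ ψ) := by rw [Subtype.dist_eq]; rfl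
  have hclos : IsCompact (closure (Set.range F)) := by
    refine BoundedContinuousFunction.arzela_ascoli (Metric.closedBall (0:ℝ) R)
      (isCompact_closedBall 0 R) (Set.range F) ?_ hequi
    rintro f φ ⟨x, rfl⟩
    rw [Metric.mem_closedBall, dist_zero_right, hFapp]
    exact le_trans (norm_coe_le_norm φ.1 x) (hR φ.1 φ.2)
  -- Part 1
  have part1 : ∀ x : ℕ → X, ∃ k : ℕ → ℕ, StrictMono k ∧
      ∀ ε : ℝ≥0∞, 0 < ε → ∃ N, ∀ m ≥ N, ∀ n ≥ N, DX (x (k m)) (x (k n)) < ε := by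
    intro x
    obtain ⟨L, _, k, hk, hconv⟩ := hclos.isSeqCompact
      (x := fun n => F (x n)) (fun n => subset_closure ⟨x n, rfl⟩)
    have hcauchy : CauchySeq ((fun n => F (x n)) ∘ k) := hconv.cauchySeq
    rw [Metric.cauchySeq_iff] at hcauchy
    refine ⟨k, hk, fun ε hε => ?_⟩
    set δ : ℝ := if ε = ⊤ then 1 else ε.toReal with hδ
    have hδpos : 0 < δ := by
      rw [hδ]; split
      · exact one_pos
      · exact ENNReal.toReal_pos hε.ne' (by assumption)
    have hδle : ENNReal.ofReal δ ≤ ε := by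
      rw [hδ]; split
      · simp_all
      · rw [ENNReal.ofReal_toReal (by assumption)]
    obtain ⟨N, hN⟩ := hcauchy δ hδpos
    refine ⟨N, fun m hm n hn => ?_⟩
    have := hN m hm n hn
    calc DX (x (k m)) (x (k n)) = ENNReal.ofReal (dist (F (x (k m))) (F (x (k n)))) :=
          hDXdist _ _
      _ < ENNReal.ofReal δ := (ENNReal.ofReal_lt_ofReal_iff hδpos).2 this
      _ ≤ ε := hδle
  refine ⟨part1, fun hcomplete x => ?_⟩
  obtain ⟨k, hk, hC⟩ := part1 x
  obtain ⟨y, hy⟩ := hcomplete (fun n => x (k n)) hC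
  exact ⟨y, k, hk, hy⟩
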